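/- Let K be an algebraically closed field, Q a quiver, and M, N finite dimensional representations of Q with Ext¹(M, N) = 0 and a given injection h : N → M. If g ∈ End(M) satisfies that g∘h is injective (so g·h(N) ≅ N), then M/h(N) degenerates to M/g(h(N)); that is, the orbit of M/g(h(N)) is contained in the orbit closure of M/h(N). More precisely, there is a short exact sequence 0 → M → M ⊕ M/h(N) → M/g(h(N)) → 0. -/
import Mathlib


/-- Riedtmann-type degeneration: over an algebraically closed field `K`, for finite dimensional
representations (modules over the path algebra `Λ`) `M`, `N` with `Ext¹(M, N) = 0`
(phrased as: every short exact sequence `0 → N → E → M → 0` splits), an injection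
`h : N → M` and `g ∈ End(M)` with `g ∘ h` injective, there is a short exact sequence
`0 → M → M ⊕ M/h(N) → M/g(h(N)) → 0` (which witnesses `M/h(N) ≤_deg M/g(h(N))`). -/
theorem ses_witnessing_degeneration (K Λ : Type) [Field K] [IsAlgClosed K]
    [Ring Λ] [Algebra K Λ]
    (M N : Type) [AddCommGroup M] [Module K M] [Module Λ M] [IsScalarTower K Λ M]
    [FiniteDimensional K M]
    [AddCommGroup N] [Module K N] [Module Λ N] [IsScalarTower K Λ N]
    [FiniteDimensional K N]
    (hext : ∀ (E : Type) [AddCommGroup E] [Module Λ E] (i : N →ₗ[Λ] E) (p : E →ₗ[Λ] M),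
      Function.Injective i → Function.Surjective p → Function.Exact i p →
      ∃ s : M →ₗ[Λ] E, p.comp s = LinearMap.id)
    (h : N →ₗ[Λ] M) (hinj : Function.Injective h)
    (g : M →ₗ[Λ] M) (hgh : Function.Injective (g.comp h)) :
    Function.Injective (LinearMap.prod g (LinearMap.range h).mkQ) ∧
    Function.Exact (LinearMap.prod g (LinearMap.range h).mkQ)
      ((LinearMap.range (g.comp h)).mkQ.comp (LinearMap.fst Λ M (M ⧸ LinearMap.range h)) -
        (Submodule.mapQ (LinearMap.range h) (LinearMap.range (g.comp h)) g
            (by rintro x ⟨n, rfl⟩; exact ⟨n, rfl⟩)).comp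
          (LinearMap.snd Λ M (M ⧸ LinearMap.range h))) ∧
    Function.Surjective
      ((LinearMap.range (g.comp h)).mkQ.comp (LinearMap.fst Λ M (M ⧸ LinearMap.range h)) -
        (Submodule.mapQ (LinearMap.range h) (LinearMap.range (g.comp h)) g
            (by rintro x ⟨n, rfl⟩; exact ⟨n, rfl⟩)).comp
          (LinearMap.snd Λ M (M ⧸ LinearMap.range h))) := by
  refine ⟨?_, ?_, ?_⟩
  · intro a b hab
    have h1 : g a = g b := congrArg Prod.fst hab
    have h2 : (LinearMap.range h).mkQ a = (LinearMap.range h).mkQ b := congrArg Prod.snd hab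
    have h3 : a - b ∈ LinearMap.range h := (Submodule.Quotient.eq _).mp h2
    obtain ⟨n, hn⟩ := h3
    have h4 : g.comp h n = 0 := by
      simp only [LinearMap.comp_apply, hn, map_sub, h1, sub_self]
    have h5 : n = 0 := hgh (by simpa using h4)
    exact sub_eq_zero.mp (by rw [← hn, h5, map_zero])
  · intro ⟨m, x⟩
    constructor
    · intro hy
      obtain ⟨m', rfl⟩ := (LinearMap.range h).mkQ_surjective x
      simp only [LinearMap.sub_apply, LinearMap.comp_apply, LinearMap.fst_apply,
        LinearMap.snd_apply, Submodule.mapQ_apply, Submodule.mkQ_apply,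
        sub_eq_zero] at hy
      have : m - g m' ∈ LinearMap.range (g.comp h) := (Submodule.Quotient.eq _).mp hy
      obtain ⟨n, hn⟩ := this
      refine ⟨m' + h n, ?_⟩
      simp only [LinearMap.prod_apply, Pi.prod, map_add]
      have hfst : g m' + g (h n) = m := by
        have h6 := hn
        simp only [LinearMap.comp_apply] at h6
        rw [h6]; abel
      have hsnd : (LinearMap.range h).mkQ m' + (LinearMap.range h).mkQ (h n) =
          (LinearMap.range h).mkQ m' := by simp
      rw [Prod.mk_add_mk, Prod.mk.injEq]
      exact ⟨hfst, hsnd⟩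
    · rintro ⟨a, ha⟩
      rw [← ha]
      simp [Submodule.mapQ_apply]
  · intro y
    obtain ⟨m, rfl⟩ := (LinearMap.range (g.comp h)).mkQ_surjective y
    exact ⟨(m, 0), by simp⟩
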